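/- If a preference profile satisfies MaxProp, then there exists a woman who is the least preferred woman of every man. -/
import Mathlib


open scoped Classical

noncomputable section

/-- A two-sided matching market with `n` men and `n` women, each with a complete
strict preference order over the other side. `mpref m k` is man `m`'s `k`-th
favourite woman (0 = top), and `wpref w k` is woman `w`'s `k`-th favourite man. -/
structure Profile (n : ℕ) where
  mpref : Fin n → (Fin n ≃ Fin n)
  wpref : Fin n → (Fin n ≃ Fin n)

namespace Profile

variable {n : ℕ}

/-- rank (0 = best) of woman `w` in man `m`'s preference list -/
def mrank (P : Profile n) (m w : Fin n) : ℕ := ((P.mpref m).symm w : ℕ)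

/-- rank (0 = best) of man `m` in woman `w`'s preference list -/
def wrank (P : Profile n) (w m : Fin n) : ℕ := ((P.wpref w).symm m : ℕ)

/-- man `m` strictly prefers woman `w` to woman `w'` -/
def mPrefers (P : Profile n) (m w w' : Fin n) : Prop := P.mrank m w < P.mrank m w'

/-- woman `w` strictly prefers man `m` to man `m'` -/
def wPrefers (P : Profile n) (w m m' : Fin n) : Prop := P.wrank w m < P.wrank w m'

/-- top choice of man `m` -/
def topM (P : Profile n) (m : Fin n) : Fin n := P.mpref m ⟨0, m.pos⟩

/-- top choice of woman `w` -/
def topW (P : Profile n) (w : Fin n) : Fin n := P.wpref w ⟨0, w.pos⟩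

/-- the profile with the roles of men and women exchanged -/
def swap (P : Profile n) : Profile n := ⟨P.wpref, P.mpref⟩

/-- State of the men-proposing deferred acceptance algorithm:
`next m` = number of proposals man `m` has made so far,
`held w` = the man woman `w` currently tentatively holds (if any). -/
structure DAState (n : ℕ) where
  next : Fin n → ℕ
  held : Fin n → Option (Fin n)

def initState (n : ℕ) : DAState n := ⟨fun _ => 0, fun _ => none⟩

/-- the men currently unmatched (held by no woman) -/
def unmatched (s : DAState n) : Finset (Fin n) :=
  Finset.univ.filter fun m => ∀ w : Fin n, s.held w ≠ some m

/-- the woman man `m` proposes to next: his most preferred woman among those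
who have not rejected him yet -/
def target (P : Profile n) (s : DAState n) (m : Fin n) : Fin n :=
  P.mpref m ⟨s.next m % n, Nat.mod_lt _ m.pos⟩

/-- the men proposing to woman `w` in the current round -/
def proposers (P : Profile n) (s : DAState n) (w : Fin n) : Finset (Fin n) :=
  (unmatched s).filter fun m => target P s m = w

/-- one round of the men-proposing deferred acceptance algorithm: every
unmatched man proposes to his favourite woman who has not rejected him yet,
and every woman tentatively holds her favourite among her current partner
and the new proposers, rejecting the rest -/
def step (P : Profile n) (s : DAState n) : DAState n where
  next := fun m => if m ∈ unmatched s then s.next m + 1 else s.next m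
  held := fun w => ((proposers P s w ∪ (s.held w).toFinset).toList).argmin (P.wrank w)

/-- the state after `k` rounds of men-proposing deferred acceptance -/
def stateAt (P : Profile n) (k : ℕ) : DAState n := (step P)^[k] (initState n)

/-- the final state of men-proposing deferred acceptance
(`n * n + 1` iterations is always enough to reach the fixed point) -/
def finalState (P : Profile n) : DAState n := stateAt P (n * n + 1)

/-- total number of proposals made during the men-proposing DA -/
def totalProposals (P : Profile n) : ℕ := ∑ m : Fin n, (finalState P).next m

/-- number of rounds of the men-proposing DA (rounds in which some proposal is made) -/
def rounds (P : Profile n) : ℕ :=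
  ((Finset.range (n * n + 1)).filter fun k => (unmatched (stateAt P k)).Nonempty).card

/-- total number of proposals received by woman `w` during the men-proposing DA -/
def proposalsTo (P : Profile n) (w : Fin n) : ℕ :=
  ∑ k ∈ Finset.range (n * n + 1), (proposers P (stateAt P k) w).card

/-- man `m` proposes to woman `w` at some point during the men-proposing DA -/
def proposedTo (P : Profile n) (m w : Fin n) : Prop :=
  ∃ k < n * n + 1, m ∈ proposers P (stateAt P k) w

/-- the men-proposing DA makes the maximum possible number `n² - n + 1` of proposals -/
def MaxProp (P : Profile n) : Prop := P.totalProposals = n * n + 1 - n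

/-- the men-proposing DA takes the maximum possible number `n² - 2n + 2` of rounds -/
def MaxRou (P : Profile n) : Prop := P.rounds = n * n + 2 - 2 * n

/-- a matching (a bijection man ↦ woman) is stable iff no man-woman pair mutually
prefer each other to their assigned partners -/
def Stable (P : Profile n) (μ : Fin n ≃ Fin n) : Prop :=
  ¬ ∃ (m w : Fin n), P.mPrefers m w (μ m) ∧ P.wPrefers w m (μ.symm w)

/-- the profile admits a unique stable matching -/
def USM (P : Profile n) : Prop := ∃! μ : Fin n ≃ Fin n, P.Stable μ

/-- the sequential preference condition of Eeckhout (2000) -/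
def SPC (P : Profile n) : Prop :=
  ∃ σ τ : Equiv.Perm (Fin n), ∀ i j : Fin n, i < j →
    P.mPrefers (σ i) (τ i) (τ j) ∧ P.wPrefers (τ i) (σ i) (σ j)

/-- the no crossing condition of Clark (2006) -/
def NCC (P : Profile n) : Prop :=
  ∃ σ τ : Equiv.Perm (Fin n), ∀ i j k l : Fin n, i < j → k < l →
    (P.mPrefers (σ i) (τ l) (τ k) → P.mPrefers (σ j) (τ l) (τ k)) ∧
    (P.wPrefers (τ k) (σ j) (σ i) → P.wPrefers (τ l) (σ j) (σ i))

/-! ### Auxiliary lemmas for the MaxProp theorem -/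

theorem DAState.ext' {s t : DAState n} (h1 : s.next = t.next) (h2 : s.held = t.held) :
    s = t := by
  cases s; cases t; cases h1; cases h2; rfl

lemma mem_unmatched {s : DAState n} {m : Fin n} :
    m ∈ unmatched s ↔ ∀ w : Fin n, s.held w ≠ some m := by
  simp [unmatched]

lemma step_next (P : Profile n) (s : DAState n) (m : Fin n) :
    (step P s).next m = if m ∈ unmatched s then s.next m + 1 else s.next m := rfl

lemma step_held (P : Profile n) (s : DAState n) (w : Fin n) :
    (step P s).held w
      = ((proposers P s w ∪ (s.held w).toFinset).toList).argmin (P.wrank w) := rfl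

lemma held_step_isSome {P : Profile n} {s : DAState n} {w : Fin n}
    (h : (proposers P s w ∪ (s.held w).toFinset).Nonempty) :
    ((step P s).held w).isSome := by
  rw [step_held, Option.isSome_iff_ne_none]
  intro hn
  rw [List.argmin_eq_none, Finset.toList_eq_nil] at hn
  rw [hn] at h
  exact Finset.not_nonempty_empty h

lemma held_step_isSome_of_old {P : Profile n} {s : DAState n} {w : Fin n}
    (h : (s.held w).isSome) : ((step P s).held w).isSome := by
  obtain ⟨m, hm⟩ := Option.isSome_iff_exists.mp h
  exact held_step_isSome ⟨m, Finset.mem_union_right _ (by simp [hm])⟩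

lemma held_step_mem {P : Profile n} {s : DAState n} {w : Fin n} {m : Fin n}
    (h : (step P s).held w = some m) :
    m ∈ proposers P s w ∨ s.held w = some m := by
  rw [step_held] at h
  have hmem := List.argmin_mem h
  rw [Finset.mem_toList, Finset.mem_union] at hmem
  rcases hmem with h' | h'
  · exact Or.inl h'
  · right; simpa [Option.mem_toFinset] using h'

lemma mem_proposers {P : Profile n} {s : DAState n} {w m : Fin n} :
    m ∈ proposers P s w ↔ m ∈ unmatched s ∧ target P s m = w := by
  simp [proposers]

/-- injectivity of the `held` assignment -/
def Inj (s : DAState n) : Prop :=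
  ∀ ⦃w w' m : Fin n⦄, s.held w = some m → s.held w' = some m → w = w'

lemma Inj.step {P : Profile n} {s : DAState n} (hinj : Inj s) : Inj (step P s) := by
  intro w w' m h1 h2
  rcases held_step_mem h1 with ha | ha <;> rcases held_step_mem h2 with hb | hb
  · rw [← (mem_proposers.mp ha).2, ← (mem_proposers.mp hb).2]
  · exact absurd hb (mem_unmatched.mp (mem_proposers.mp ha).1 w')
  · exact absurd ha (mem_unmatched.mp (mem_proposers.mp hb).1 w)
  · exact hinj ha hb

lemma exists_held_of_all_isSome {s : DAState n} (hinj : Inj s)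
    (hall : ∀ w : Fin n, (s.held w).isSome) (m : Fin n) :
    ∃ w : Fin n, s.held w = some m := by
  have hsome : ∀ w : Fin n, s.held w = some ((s.held w).get (hall w)) :=
    fun w => (Option.some_get (hall w)).symm
  have hf : Function.Injective (fun w => (s.held w).get (hall w)) := by
    intro w w' h
    exact hinj (hsome w) (by rw [hsome w']; exact congrArg some h.symm)
  obtain ⟨w, hw⟩ := Finite.surjective_of_injective hf m
  exact ⟨w, by rw [hsome w]; exact congrArg some hw⟩

/-- the key invariant of the DA states -/
def GoodState (P : Profile n) (s : DAState n) : Prop :=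
  Inj s ∧ (∀ m : Fin n, s.next m ≤ n) ∧
    ∀ (m : Fin n) (j : ℕ) (hj : j < n), j < s.next m →
      ((s.held (P.mpref m ⟨j, hj⟩)).isSome)

lemma all_isSome_of_next_ge {P : Profile n} {s : DAState n} (hg : GoodState P s)
    {m : Fin n} (hm : n ≤ s.next m) : ∀ w : Fin n, (s.held w).isSome := by
  intro w
  have hj := hg.2.2 m ((P.mpref m).symm w) ((P.mpref m).symm w).isLt
    (lt_of_lt_of_le ((P.mpref m).symm w).isLt hm)
  have he : P.mpref m ⟨((P.mpref m).symm w : ℕ), ((P.mpref m).symm w).isLt⟩ = w := by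
    exact (P.mpref m).apply_symm_apply w
  rwa [he] at hj

lemma next_lt_of_unmatched {P : Profile n} {s : DAState n} (hg : GoodState P s)
    {m : Fin n} (hm : m ∈ unmatched s) : s.next m < n := by
  by_contra hle
  push_neg at hle
  obtain ⟨w, hw⟩ := exists_held_of_all_isSome hg.1 (all_isSome_of_next_ge hg hle) m
  exact mem_unmatched.mp hm w hw

lemma GoodState.step {P : Profile n} {s : DAState n} (hg : GoodState P s) :
    GoodState P (step P s) := by
  obtain ⟨hinj, hle, hJ⟩ := hg
  refine ⟨hinj.step, ?_, ?_⟩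
  · intro m
    rw [step_next]
    split_ifs with hm
    · exact next_lt_of_unmatched ⟨hinj, hle, hJ⟩ hm
    · exact hle m
  · intro m j hj hlt
    rw [step_next] at hlt
    split_ifs at hlt with hm
    · rcases Nat.lt_succ_iff_lt_or_eq.mp hlt with h' | h'
      · exact held_step_isSome_of_old (hJ m j hj h')
      · -- j = s.next m; m proposes to this woman now
        have hlt' : s.next m < n := next_lt_of_unmatched ⟨hinj, hle, hJ⟩ hm
        have htgt : target P s m = P.mpref m ⟨j, hj⟩ := by
          subst h'
          unfold target
          congr 1
          exact Fin.ext (Nat.mod_eq_of_lt hlt')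
        refine held_step_isSome ⟨m, Finset.mem_union_left _ ?_⟩
        exact mem_proposers.mpr ⟨hm, htgt⟩
    · exact held_step_isSome_of_old (hJ m j hj hlt)

lemma stateAt_succ (P : Profile n) (k : ℕ) :
    stateAt P (k + 1) = step P (stateAt P k) := by
  unfold stateAt
  exact Function.iterate_succ_apply' _ _ _

lemma good_stateAt (P : Profile n) (k : ℕ) : GoodState P (stateAt P k) := by
  induction k with
  | zero =>
      refine ⟨fun w w' m h1 => by simp [stateAt, initState] at h1, fun m => Nat.zero_le _,
        fun m j hj hlt => by simp [stateAt, initState] at hlt⟩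
  | succ k ih => rw [stateAt_succ]; exact ih.step

lemma step_of_unmatched_empty {P : Profile n} {s : DAState n}
    (h : unmatched s = ∅) : step P s = s := by
  refine DAState.ext' (funext fun m => ?_) (funext fun w => ?_)
  · rw [step_next, if_neg (by rw [h]; exact Finset.notMem_empty m)]
  · rw [step_held]
    have hp : proposers P s w = ∅ := by
      apply Finset.eq_empty_of_forall_notMem
      intro m hm
      exact Finset.notMem_empty m (h ▸ Finset.mem_of_mem_filter m hm)
    rw [hp, Finset.empty_union]
    cases hc : s.held w with
    | none => simp
    | some m => simp

lemma stateAt_fixed {P : Profile n} {c : ℕ} (h : unmatched (stateAt P c) = ∅) :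
    ∀ j, stateAt P (c + j) = stateAt P c := by
  intro j
  induction j with
  | zero => rfl
  | succ j ih => rw [← Nat.add_assoc, stateAt_succ, ih, step_of_unmatched_empty h]

end Profile

/-- Under MaxProp, there is a woman who is the least preferred woman of every man. -/
theorem maxProp_exists_common_last (n : ℕ) (P : Profile n) (h : P.MaxProp) :
    ∃ w : Fin n, ∀ m w' : Fin n, w' ≠ w → P.mPrefers m w' w := by
  classical
  simp only [Profile.MaxProp, Profile.totalProposals, Profile.finalState] at h
  cases n with
  | zero => simp at h
  | succ q =>
  -- arithmetic helper
  have harith : (q+1) * (q+1) + 1 - (q+1) = q * q + q + 1 := by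
    zify [show (q+1) ≤ (q+1) * (q+1) + 1 by nlinarith]
    ring
  rw [harith] at h
  -- existence of a man who made q+1 proposals
  set T : ℕ := (q+1) * (q+1) + 1 with hTdef
  have goodT := Profile.good_stateAt P T
  have hex : ∃ m : Fin (q+1), (Profile.stateAt P T).next m = q + 1 := by
    by_contra hc
    push_neg at hc
    have hlt : ∀ m : Fin (q+1), (Profile.stateAt P T).next m ≤ q := fun m =>
      Nat.lt_succ_iff.mp (lt_of_le_of_ne (goodT.2.1 m) (hc m))
    have hsum : ∑ m : Fin (q+1), (Profile.stateAt P T).next m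
        ≤ ∑ _m : Fin (q+1), q := Finset.sum_le_sum (fun m _ => hlt m)
    have hconst : ∑ _m : Fin (q+1), q = (q+1) * q := by
      rw [Finset.sum_const, Finset.card_univ, Fintype.card_fin, smul_eq_mul]
    rw [hconst, h] at hsum
    nlinarith
  obtain ⟨mstar, hmstar⟩ := hex
  -- find the round k where mstar makes his last proposal
  set S : Finset ℕ :=
    (Finset.range (T+1)).filter (fun k => (Profile.stateAt P k).next mstar ≤ q) with hSdef
  have h0S : (0 : ℕ) ∈ S := by
    refine Finset.mem_filter.mpr ⟨Finset.mem_range.mpr (Nat.succ_pos T), ?_⟩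
    exact Nat.zero_le q
  set k : ℕ := S.max' ⟨0, h0S⟩ with hkdef
  have hkS : k ∈ S := S.max'_mem _
  have hkT : k < T + 1 := Finset.mem_range.mp (Finset.mem_filter.mp hkS).1
  have hkq : (Profile.stateAt P k).next mstar ≤ q := (Finset.mem_filter.mp hkS).2
  have hkne : k ≠ T := by
    intro he
    rw [he, hmstar] at hkq
    omega
  have hklt : k < T := by omega
  have hk1 : (Profile.stateAt P (k+1)).next mstar = q + 1 := by
    have hnotin : k + 1 ∉ S := fun hmem => absurd (S.le_max' _ hmem) (by omega)
    have hmem : k + 1 ∈ Finset.range (T+1) := Finset.mem_range.mpr (by omega)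
    have : ¬ (Profile.stateAt P (k+1)).next mstar ≤ q := fun hle =>
      hnotin (Finset.mem_filter.mpr ⟨hmem, hle⟩)
    have hub := (Profile.good_stateAt P (k+1)).2.1 mstar
    omega
  set sk : Profile.DAState (q+1) := Profile.stateAt P k with hskdef
  have good_k := Profile.good_stateAt P k
  rw [← hskdef] at good_k
  have humem : mstar ∈ Profile.unmatched sk ∧ sk.next mstar = q := by
    rw [Profile.stateAt_succ, Profile.step_next, ← hskdef] at hk1
    split_ifs at hk1 with hu
    · exact ⟨hu, by omega⟩
    · omega
  obtain ⟨humem, hnk⟩ := humem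
  -- the last woman of mstar
  set wstar : Fin (q+1) := P.mpref mstar ⟨q, Nat.lt_succ_self q⟩ with hwdef
  have hsymmw : (P.mpref mstar).symm wstar = ⟨q, Nat.lt_succ_self q⟩ :=
    (P.mpref mstar).symm_apply_apply _
  -- every other woman currently holds someone
  have hws : ∀ w : Fin (q+1), w ≠ wstar → (sk.held w).isSome := by
    intro w hw
    have hjlt : ((P.mpref mstar).symm w : ℕ) < q := by
      have h1 : ((P.mpref mstar).symm w : ℕ) < q + 1 := ((P.mpref mstar).symm w).isLt
      have h2 : ((P.mpref mstar).symm w : ℕ) ≠ q := by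
        intro he
        apply hw
        have heq : (P.mpref mstar).symm w = (P.mpref mstar).symm wstar := by
          rw [hsymmw]; exact Fin.ext he
        exact (P.mpref mstar).symm.injective heq
      omega
    have hj := good_k.2.2 mstar ((P.mpref mstar).symm w : ℕ)
      ((P.mpref mstar).symm w).isLt (by rw [hnk]; exact hjlt)
    have happ : P.mpref mstar
        ⟨((P.mpref mstar).symm w : ℕ), ((P.mpref mstar).symm w).isLt⟩ = w :=
      (P.mpref mstar).apply_symm_apply w
    rwa [happ] at hj
  -- wstar holds nobody
  have hnone : sk.held wstar = none := by
    cases hc : sk.held wstar with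
    | none => rfl
    | some m0 =>
      exfalso
      have hall : ∀ w : Fin (q+1), (sk.held w).isSome := by
        intro w
        by_cases hw : w = wstar
        · rw [hw, hc]; rfl
        · exact hws w hw
      obtain ⟨w, hwm⟩ := Profile.exists_held_of_all_isSome good_k.1 hall mstar
      exact Profile.mem_unmatched.mp humem w hwm
  -- nobody has proposed more than q times yet
  have hnextle : ∀ m : Fin (q+1), sk.next m ≤ q := by
    intro m
    by_contra hc
    push_neg at hc
    have := Profile.all_isSome_of_next_ge good_k (m := m) (by omega) wstar
    rw [hnone] at this
    simp at this
  -- every man other than mstar is currently matched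
  have hcardw : (Finset.univ.erase wstar : Finset (Fin (q+1))).card = q := by
    rw [Finset.card_erase_of_mem (Finset.mem_univ _), Finset.card_univ, Fintype.card_fin]; omega
  have hcardm : (Finset.univ.erase mstar : Finset (Fin (q+1))).card = q := by
    rw [Finset.card_erase_of_mem (Finset.mem_univ _), Finset.card_univ, Fintype.card_fin]; omega
  have hmatched : ∀ m : Fin (q+1), m ≠ mstar → ∃ w, sk.held w = some m := by
    set f : Fin (q+1) → Fin (q+1) := fun w => (sk.held w).getD mstar with hfdef
    have hfs : ∀ w ∈ Finset.univ.erase wstar, sk.held w = some (f w) := by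
      intro w hw
      obtain ⟨m0, hm0⟩ := Option.isSome_iff_exists.mp (hws w (Finset.mem_erase.mp hw).1)
      rw [hm0]; simp [hfdef, hm0]
    have hinj : Set.InjOn f (Finset.univ.erase wstar : Finset (Fin (q+1))) := by
      intro a ha b hb hab
      exact good_k.1 (hfs a (Finset.mem_coe.mp ha))
        (by rw [hfs b (Finset.mem_coe.mp hb)]; exact congrArg some hab.symm)
    have hsub : (Finset.univ.erase wstar).image f ⊆ Finset.univ.erase mstar := by
      intro x hx
      obtain ⟨w, hw, rfl⟩ := Finset.mem_image.mp hx
      refine Finset.mem_erase.mpr ⟨?_, Finset.mem_univ _⟩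
      intro he
      exact Profile.mem_unmatched.mp humem w (by rw [hfs w hw, he])
    have heq : (Finset.univ.erase wstar).image f = Finset.univ.erase mstar :=
      Finset.eq_of_subset_of_card_le hsub
        (by rw [Finset.card_image_of_injOn hinj, hcardw, hcardm])
    intro m hm
    have hmem : m ∈ (Finset.univ.erase wstar).image f := by
      rw [heq]; exact Finset.mem_erase.mpr ⟨hm, Finset.mem_univ _⟩
    obtain ⟨w, hw, hwm⟩ := Finset.mem_image.mp hmem
    exact ⟨w, by rw [hfs w hw, hwm]⟩
  -- after round k, everyone is matched
  have hall1 : ∀ w : Fin (q+1), ((Profile.stateAt P (k+1)).held w).isSome := by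
    intro w
    rw [Profile.stateAt_succ, ← hskdef]
    by_cases hw : w = wstar
    · refine Profile.held_step_isSome ⟨mstar, Finset.mem_union_left _ ?_⟩
      refine Profile.mem_proposers.mpr ⟨humem, ?_⟩
      subst hw
      exact congrArg (P.mpref mstar)
        (Fin.ext (show sk.next mstar % (q+1) = q by
          rw [hnk]; exact Nat.mod_eq_of_lt (Nat.lt_succ_self q)))
    · exact Profile.held_step_isSome_of_old (hws w hw)
  have hempty : Profile.unmatched (Profile.stateAt P (k+1)) = ∅ := by
    apply Finset.eq_empty_of_forall_notMem
    intro m hm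
    obtain ⟨w, hw⟩ := Profile.exists_held_of_all_isSome
      (Profile.good_stateAt P (k+1)).1 hall1 m
    exact Profile.mem_unmatched.mp hm w hw
  have hfix : Profile.stateAt P T = Profile.stateAt P (k+1) := by
    have hTk : T = (k+1) + (T - (k+1)) := by omega
    rw [hTk]
    exact Profile.stateAt_fixed hempty _
  rw [hfix] at h
  -- split off mstar from the sum
  have hsplit := Finset.add_sum_erase Finset.univ
    (Profile.stateAt P (k+1)).next (Finset.mem_univ mstar)
  have hnext1 : ∀ m ∈ Finset.univ.erase mstar,
      (Profile.stateAt P (k+1)).next m = sk.next m := by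
    intro m hm
    rw [Profile.stateAt_succ, ← hskdef, Profile.step_next, if_neg]
    intro hu
    obtain ⟨w, hw⟩ := hmatched m (Finset.mem_erase.mp hm).1
    exact Profile.mem_unmatched.mp hu w hw
  have hsum2 : ∑ x ∈ Finset.univ.erase mstar, sk.next x = q * q := by
    have h1 : ∑ x ∈ Finset.univ.erase mstar, (Profile.stateAt P (k+1)).next x
        = ∑ x ∈ Finset.univ.erase mstar, sk.next x :=
      Finset.sum_congr rfl hnext1
    rw [h1, hk1] at hsplit
    rw [h] at hsplit
    linarith
  -- every other man has made exactly q proposals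
  have hqall : ∀ m ∈ Finset.univ.erase mstar, sk.next m = q := by
    by_contra hc
    push_neg at hc
    obtain ⟨m0, hm0, hne⟩ := hc
    have hlt : sk.next m0 < q := lt_of_le_of_ne (hnextle m0) hne
    have hslt : ∑ x ∈ Finset.univ.erase mstar, sk.next x
        < ∑ _x ∈ Finset.univ.erase mstar, q :=
      Finset.sum_lt_sum (fun i _ => hnextle i) ⟨m0, hm0, hlt⟩
    rw [Finset.sum_const, hcardm, smul_eq_mul, hsum2] at hslt
    omega
  -- wstar is ranked last by every man
  have hrank : ∀ m : Fin (q+1), ((P.mpref m).symm wstar : ℕ) = q := by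
    intro m
    have hge : sk.next m ≤ ((P.mpref m).symm wstar : ℕ) := by
      by_contra hcc
      push_neg at hcc
      have hj := good_k.2.2 m ((P.mpref m).symm wstar : ℕ)
        ((P.mpref m).symm wstar).isLt hcc
      have happ : P.mpref m
          ⟨((P.mpref m).symm wstar : ℕ), ((P.mpref m).symm wstar).isLt⟩ = wstar :=
        (P.mpref m).apply_symm_apply wstar
      rw [happ, hnone] at hj
      simp at hj
    have hlt : ((P.mpref m).symm wstar : ℕ) < q + 1 := ((P.mpref m).symm wstar).isLt
    by_cases hm : m = mstar
    · subst hm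
      rw [hsymmw]
    · have h1 : sk.next m = q :=
        hqall m (Finset.mem_erase.mpr ⟨hm, Finset.mem_univ _⟩)
      omega
  -- conclude
  refine ⟨wstar, fun m w' hw' => ?_⟩
  simp only [Profile.mPrefers, Profile.mrank]
  rw [hrank m]
  have hlt' : ((P.mpref m).symm w' : ℕ) < q + 1 := ((P.mpref m).symm w').isLt
  have hne : ((P.mpref m).symm w' : ℕ) ≠ q := by
    intro he
    apply hw'
    have heq : (P.mpref m).symm w' = (P.mpref m).symm wstar :=
      Fin.ext (by rw [he, hrank m])
    exact (P.mpref m).symm.injective heq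
  omega
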